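/- arXiv:2204.07497 — 2 statements merged into one kernel-verified Lean document; each statement's English description precedes it below -/
import Mathlib

section
/- Let Δt > 0, let u⁰, u¹ : ℝ³ → ℝ³ be twice continuously differentiable on an open neighborhood of the closed unit cube Ω = [0,1]³, let p : ℝ³ → ℝ be continuously differentiable there, and set ū := (u⁰ + u¹)/2. Suppose the ideal (Re = ∞, zero force) strong-form midpoint time-discrete equation holds at every point of Ω: (u¹ − u⁰)/Δt − ū × (curl ū) + ∇p = 0, that u⁰ × n = 0 and u¹ × n = 0 on ∂Ω, and that p = 0 at every point of ∂Ω. Then the fluid helicity is exactly conserved: ∫_Ω u¹ · (curl u¹) dx = ∫_Ω u⁰ · (curl u⁰) dx. -/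
open MeasureTheory

noncomputable section

/-- Points of ℝ³, represented as functions `Fin 3 → ℝ`. -/
abbrev R3 : Type := Fin 3 → ℝ

/-- Partial derivative in the `i`-th coordinate direction. -/
noncomputable def pd (i : Fin 3) (f : R3 → ℝ) (x : R3) : ℝ :=
  fderiv ℝ f x (Pi.single i 1)

/-- Curl of a vector field on ℝ³. -/
noncomputable def vcurl (v : R3 → R3) (x : R3) : R3 :=
  ![pd 1 (fun y => v y 2) x - pd 2 (fun y => v y 1) x,
    pd 2 (fun y => v y 0) x - pd 0 (fun y => v y 2) x,
    pd 0 (fun y => v y 1) x - pd 1 (fun y => v y 0) x]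

/-- Divergence of a vector field on ℝ³. -/
noncomputable def vdiv (v : R3 → R3) (x : R3) : ℝ :=
  pd 0 (fun y => v y 0) x + pd 1 (fun y => v y 1) x + pd 2 (fun y => v y 2) x

/-- Gradient of a scalar field on ℝ³. -/
noncomputable def vgrad (f : R3 → ℝ) (x : R3) : R3 := fun i => pd i f x

/-- Euclidean dot product on ℝ³. -/
def dot3 (a b : R3) : ℝ := a 0 * b 0 + a 1 * b 1 + a 2 * b 2

/-- Cross product on ℝ³. -/
def cross3 (a b : R3) : R3 :=
  ![a 1 * b 2 - a 2 * b 1, a 2 * b 0 - a 0 * b 2, a 0 * b 1 - a 1 * b 0]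

/-- The closed unit cube Ω = [0,1]³. -/
def cube : Set R3 := Set.Icc 0 1

/-- `x` lies on one of the two faces of the cube orthogonal to direction `i`. -/
def onFace (x : R3) (i : Fin 3) : Prop := x i = 0 ∨ x i = 1

/-- `x` lies on the boundary ∂Ω of the cube. -/
def onBdry (x : R3) : Prop := x ∈ cube ∧ ∃ i : Fin 3, onFace x i

/-- Tangential boundary condition `v × n = 0` on ∂Ω: on each face of the cube
the two components of `v` tangential to that face vanish. -/
def TangentialBC (v : R3 → R3) : Prop :=
  ∀ x ∈ cube, ∀ i : Fin 3, onFace x i → ∀ j : Fin 3, j ≠ i → v x j = 0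

/-- Normal boundary condition `v · n = 0` on ∂Ω: on each face of the cube
the component of `v` normal to that face vanishes. -/
def NormalBC (v : R3 → R3) : Prop :=
  ∀ x ∈ cube, ∀ i : Fin 3, onFace x i → v x i = 0
namespace HelDHC

abbrev e3 (i : Fin 3) : R3 := Pi.single i 1

lemma pd_add {f g : R3 → ℝ} {x : R3} (i : Fin 3) (hf : DifferentiableAt ℝ f x)
    (hg : DifferentiableAt ℝ g x) :
    pd i (fun y => f y + g y) x = pd i f x + pd i g x := by
  simp [pd, fderiv_fun_add hf hg]

lemma pd_sub {f g : R3 → ℝ} {x : R3} (i : Fin 3) (hf : DifferentiableAt ℝ f x)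
    (hg : DifferentiableAt ℝ g x) :
    pd i (fun y => f y - g y) x = pd i f x - pd i g x := by
  simp [pd, fderiv_fun_sub hf hg]

lemma pd_mul {f g : R3 → ℝ} {x : R3} (i : Fin 3) (hf : DifferentiableAt ℝ f x)
    (hg : DifferentiableAt ℝ g x) :
    pd i (fun y => f y * g y) x = pd i f x * g x + f x * pd i g x := by
  simp [pd, fderiv_fun_mul hf hg]
  ring

lemma pd_const_mul {f : R3 → ℝ} {x : R3} (i : Fin 3) (c : ℝ) (hf : DifferentiableAt ℝ f x) :
    pd i (fun y => c * f y) x = c * pd i f x := by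
  simp [pd, fderiv_const_mul hf c]

lemma diffAt_apply {v : R3 → R3} {x : R3} (hv : DifferentiableAt ℝ v x) (k : Fin 3) :
    DifferentiableAt ℝ (fun y => v y k) x :=
  DifferentiableAt.comp x
    ((ContinuousLinearMap.proj (R := ℝ) (φ := fun _ : Fin 3 => ℝ) k).differentiableAt) hv

lemma contDiffOn_apply {v : R3 → R3} {U : Set R3} {n : WithTop ℕ∞} (hv : ContDiffOn ℝ n v U) (k : Fin 3) :
    ContDiffOn ℝ n (fun y => v y k) U :=
  (ContinuousLinearMap.proj (R := ℝ) (φ := fun _ : Fin 3 => ℝ) k).contDiff.comp_contDiffOn hv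

end HelDHC
namespace HelDHC

lemma contDiffAt_of_on {f : R3 → ℝ} {U : Set R3} {x : R3} {n : WithTop ℕ∞} (hU : IsOpen U)
    (hf : ContDiffOn ℝ n f U) (hx : x ∈ U) : ContDiffAt ℝ n f x :=
  (hf x hx).contDiffAt (hU.mem_nhds hx)

lemma diffAt_pd {f : R3 → ℝ} {U : Set R3} {x : R3} (hU : IsOpen U)
    (hf : ContDiffOn ℝ 2 f U) (hx : x ∈ U) (j : Fin 3) :
    DifferentiableAt ℝ (fun y => pd j f y) x := by
  have h1 : ContDiffAt ℝ 1 (fderiv ℝ f) x :=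
    (contDiffAt_of_on hU hf hx).fderiv_right (by norm_num)
  exact (h1.differentiableAt one_ne_zero).clm_apply (differentiableAt_const _)

lemma pd_comm {f : R3 → ℝ} {U : Set R3} {x : R3} (hU : IsOpen U)
    (hf : ContDiffOn ℝ 2 f U) (hx : x ∈ U) (i j : Fin 3) :
    pd i (fun y => pd j f y) x = pd j (fun y => pd i f y) x := by
  have hfx : ContDiffAt ℝ 2 f x := contDiffAt_of_on hU hf hx
  have hsym := hfx.isSymmSndFDerivAt (by norm_num)
  have hdd : DifferentiableAt ℝ (fderiv ℝ f) x :=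
    (hfx.fderiv_right (by norm_num : (1:WithTop ℕ∞) + 1 ≤ 2)).differentiableAt one_ne_zero
  have key : ∀ a b : R3,
      fderiv ℝ (fun y => fderiv ℝ f y b) x a = fderiv ℝ (fderiv ℝ f) x a b := by
    intro a b
    rw [fderiv_clm_apply hdd (differentiableAt_const _)]
    simp
  show fderiv ℝ (fun y => fderiv ℝ f y (Pi.single j 1)) x (Pi.single i 1)
      = fderiv ℝ (fun y => fderiv ℝ f y (Pi.single i 1)) x (Pi.single j 1)
  rw [key, key]
  exact hsym _ _

end HelDHC
namespace HelDHC

lemma vcurl0 (v : R3 → R3) (x : R3) :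
    vcurl v x 0 = pd 1 (fun y => v y 2) x - pd 2 (fun y => v y 1) x := rfl
lemma vcurl1 (v : R3 → R3) (x : R3) :
    vcurl v x 1 = pd 2 (fun y => v y 0) x - pd 0 (fun y => v y 2) x := rfl
lemma vcurl2 (v : R3 → R3) (x : R3) :
    vcurl v x 2 = pd 0 (fun y => v y 1) x - pd 1 (fun y => v y 0) x := rfl

lemma dot3_cross_self (a b : R3) : dot3 (cross3 a b) b = 0 := by
  simp [dot3, cross3]
  ring

lemma div_cross {a b : R3 → R3} {x : R3} (ha : DifferentiableAt ℝ a x)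
    (hb : DifferentiableAt ℝ b x) :
    vdiv (fun y => cross3 (a y) (b y)) x
      = dot3 (b x) (vcurl a x) - dot3 (a x) (vcurl b x) := by
  have hak := fun k => diffAt_apply ha k
  have hbk := fun k => diffAt_apply hb k
  have h0 : (fun y => cross3 (a y) (b y) 0) = fun y => a y 1 * b y 2 - a y 2 * b y 1 := by
    funext y; simp [cross3]
  have h1 : (fun y => cross3 (a y) (b y) 1) = fun y => a y 2 * b y 0 - a y 0 * b y 2 := by
    funext y; simp [cross3]
  have h2 : (fun y => cross3 (a y) (b y) 2) = fun y => a y 0 * b y 1 - a y 1 * b y 0 := by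
    funext y; simp [cross3]
  rw [vdiv, h0, h1, h2,
    pd_sub _ ((hak 1).fun_mul (hbk 2)) ((hak 2).fun_mul (hbk 1)),
    pd_sub _ ((hak 2).fun_mul (hbk 0)) ((hak 0).fun_mul (hbk 2)),
    pd_sub _ ((hak 0).fun_mul (hbk 1)) ((hak 1).fun_mul (hbk 0)),
    pd_mul _ (hak 1) (hbk 2), pd_mul _ (hak 2) (hbk 1),
    pd_mul _ (hak 2) (hbk 0), pd_mul _ (hak 0) (hbk 2),
    pd_mul _ (hak 0) (hbk 1), pd_mul _ (hak 1) (hbk 0)]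
  simp only [dot3, vcurl0, vcurl1, vcurl2]
  ring

lemma div_qsmul {q : R3 → ℝ} {w : R3 → R3} {x : R3} (hq : DifferentiableAt ℝ q x)
    (hw : ∀ k, DifferentiableAt ℝ (fun y => w y k) x) :
    vdiv (fun y => q y • w y) x = dot3 (vgrad q x) (w x) + q x * vdiv w x := by
  have h : ∀ k : Fin 3, (fun y => (q y • w y) k) = fun y => q y * w y k := by
    intro k; funext y; simp
  rw [vdiv, h 0, h 1, h 2, pd_mul _ hq (hw 0), pd_mul _ hq (hw 1), pd_mul _ hq (hw 2)]
  simp only [dot3, vgrad, vdiv]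
  ring

lemma vdiv_sub {A B : R3 → R3} {x : R3} (hA : ∀ k, DifferentiableAt ℝ (fun y => A y k) x)
    (hB : ∀ k, DifferentiableAt ℝ (fun y => B y k) x) :
    vdiv (fun y => A y - B y) x = vdiv A x - vdiv B x := by
  have h : ∀ k : Fin 3, (fun y => (A y - B y) k) = fun y => A y k - B y k := by
    intro k; funext y; simp
  rw [vdiv, h 0, h 1, h 2, pd_sub _ (hA 0) (hB 0), pd_sub _ (hA 1) (hB 1),
    pd_sub _ (hA 2) (hB 2)]
  rw [vdiv, vdiv]
  ring

lemma div_curl_zero {v : R3 → R3} {U : Set R3} {x : R3} (hU : IsOpen U)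
    (hv : ContDiffOn ℝ 2 v U) (hx : x ∈ U) :
    vdiv (vcurl v) x = 0 := by
  have hk : ∀ k : Fin 3, ContDiffOn ℝ 2 (fun y => v y k) U := fun k => contDiffOn_apply hv k
  have hd : ∀ j k : Fin 3, DifferentiableAt ℝ (fun y => pd j (fun z => v z k) y) x :=
    fun j k => diffAt_pd hU (hk k) hx j
  have h0 : (fun y => vcurl v y 0)
      = fun y => pd 1 (fun z => v z 2) y - pd 2 (fun z => v z 1) y := rfl
  have h1 : (fun y => vcurl v y 1)
      = fun y => pd 2 (fun z => v z 0) y - pd 0 (fun z => v z 2) y := rfl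
  have h2 : (fun y => vcurl v y 2)
      = fun y => pd 0 (fun z => v z 1) y - pd 1 (fun z => v z 0) y := rfl
  rw [vdiv, h0, h1, h2, pd_sub _ (hd 1 2) (hd 2 1), pd_sub _ (hd 2 0) (hd 0 2),
    pd_sub _ (hd 0 1) (hd 1 0),
    pd_comm hU (hk 2) hx 0 1, pd_comm hU (hk 1) hx 0 2, pd_comm hU (hk 0) hx 1 2]
  ring

end HelDHC
namespace HelDHC

lemma integral_vdiv_eq_zero {F : R3 → R3} {U : Set R3} (hU : IsOpen U) (hcube : cube ⊆ U)
    (hF : ContDiffOn ℝ 1 F U) (hbF : ∀ x, onBdry x → F x = 0) :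
    ∫ x in cube, vdiv F x = 0 := by
  have hdF : ∀ x ∈ U, DifferentiableAt ℝ F x := fun x hx =>
    ((hF.differentiableOn one_ne_zero) x hx).differentiableAt (hU.mem_nhds hx)
  -- continuity of the divergence integrand
  have hcont : ContinuousOn (fun x => ∑ i : Fin 3, fderiv ℝ F x (Pi.single i 1) i) U := by
    have hg : ContinuousOn (fderiv ℝ F) U := hF.continuousOn_fderiv_of_isOpen hU le_rfl
    apply continuousOn_finset_sum
    intro i _
    have h1 := ((continuous_apply i).comp
      ((ContinuousLinearMap.apply ℝ R3 (Pi.single i (1:ℝ))).continuous)).comp_continuousOn hg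
    exact h1
  have hle : (0 : R3) ≤ 1 := fun i => by norm_num
  have key := integral_divergence_of_hasFDerivAt_off_countable (a := (0:R3)) (b := 1)
    hle F (fun x => fderiv ℝ F x) ∅ Set.countable_empty
    (hF.continuousOn.mono hcube)
    (by
      intro x hx
      refine (hdF x (hcube ?_)).hasFDerivAt
      rw [cube, Set.Icc, Set.mem_setOf_eq]
      constructor <;> intro i <;>
        have := hx.1 i (Set.mem_univ i)
      · exact le_of_lt this.1
      · exact le_of_lt (hx.1 i (Set.mem_univ i)).2)
    ((hcont.mono hcube).integrableOn_compact isCompact_Icc)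
  have hface : ∀ (i : Fin 3) (c : ℝ), c = 0 ∨ c = 1 →
      (∫ x in Set.Icc ((0:R3) ∘ i.succAbove) ((1:R3) ∘ i.succAbove),
        F (i.insertNth c x) i) = 0 := by
    intro i c hc
    apply setIntegral_eq_zero_of_forall_eq_zero
    intro x hx
    have hmem : i.insertNth c x ∈ cube := by
      rw [cube, Fin.insertNth_mem_Icc]
      exact ⟨by rcases hc with h | h <;> simp [h, Set.mem_Icc], hx⟩
    have hz : F (i.insertNth c x) = 0 :=
      hbF _ ⟨hmem, i, by rcases hc with h | h <;>
        simp [onFace, Fin.insertNth_apply_same, h]⟩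
    simp [hz]
  have hL : ∫ x in cube, vdiv F x
      = ∫ x in Set.Icc (0:R3) 1, ∑ i : Fin 3, fderiv ℝ F x (Pi.single i 1) i := by
    apply setIntegral_congr_fun measurableSet_Icc
    intro x hx
    have hFx : DifferentiableAt ℝ F x := hdF x (hcube hx)
    have hpd : ∀ i k : Fin 3, pd i (fun y => F y k) x
        = fderiv ℝ F x (Pi.single i 1) k := by
      intro i k
      have h := ((ContinuousLinearMap.proj (R := ℝ) (φ := fun _ : Fin 3 => ℝ)
        k).hasFDerivAt.comp x hFx.hasFDerivAt).fderiv
      rw [pd, show (fun y => F y k)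
        = (⇑(ContinuousLinearMap.proj (R := ℝ) (φ := fun _ : Fin 3 => ℝ) k) ∘ F) from rfl, h]
      rfl
    simp [vdiv, Fin.sum_univ_three, hpd]
  rw [hL, key]
  apply Finset.sum_eq_zero
  intro i _
  rw [hface i ((1:R3) i) (Or.inr rfl), hface i ((0:R3) i) (Or.inl rfl), sub_zero]

end HelDHC
namespace HelDHC

lemma contDiffOn_pd {f : R3 → ℝ} {U : Set R3} (hU : IsOpen U)
    (hf : ContDiffOn ℝ 2 f U) (j : Fin 3) :
    ContDiffOn ℝ 1 (fun y => pd j f y) U := by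
  have h := hf.fderiv_of_isOpen hU (by norm_num : (1:WithTop ℕ∞) + 1 ≤ 2)
  exact (ContinuousLinearMap.apply ℝ ℝ (Pi.single j (1:ℝ))).contDiff.comp_contDiffOn h

lemma pd_half_add {f g : R3 → ℝ} {x : R3} (i : Fin 3) (hf : DifferentiableAt ℝ f x)
    (hg : DifferentiableAt ℝ g x) :
    pd i (fun y => 2⁻¹ * (f y + g y)) x = 2⁻¹ * (pd i f x + pd i g x) := by
  rw [pd_const_mul _ _ (hf.fun_add hg), pd_add _ hf hg]

lemma contDiffOn_curl_apply {v : R3 → R3} {U : Set R3} (hU : IsOpen U)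
    (hv : ContDiffOn ℝ 2 v U) (k : Fin 3) :
    ContDiffOn ℝ 1 (fun y => vcurl v y k) U := by
  fin_cases k
  · exact (contDiffOn_pd hU (contDiffOn_apply hv 2) 1).sub
      (contDiffOn_pd hU (contDiffOn_apply hv 1) 2)
  · exact (contDiffOn_pd hU (contDiffOn_apply hv 0) 2).sub
      (contDiffOn_pd hU (contDiffOn_apply hv 2) 0)
  · exact (contDiffOn_pd hU (contDiffOn_apply hv 1) 0).sub
      (contDiffOn_pd hU (contDiffOn_apply hv 0) 1)

lemma continuousOn_helicity {v : R3 → R3} {U : Set R3} (hU : IsOpen U)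
    (hv : ContDiffOn ℝ 2 v U) :
    ContinuousOn (fun x => dot3 (v x) (vcurl v x)) U := by
  have hk : ∀ k : Fin 3, ContinuousOn (fun x => v x k) U :=
    fun k => (contDiffOn_apply hv k).continuousOn
  have hc : ∀ k : Fin 3, ContinuousOn (fun x => vcurl v x k) U :=
    fun k => (contDiffOn_curl_apply hU hv k).continuousOn
  show ContinuousOn (fun x => v x 0 * vcurl v x 0 + v x 1 * vcurl v x 1
    + v x 2 * vcurl v x 2) U
  exact (((hk 0).mul (hc 0)).add ((hk 1).mul (hc 1))).add ((hk 2).mul (hc 2))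

end HelDHC

open HelDHC

/-- Exact helicity conservation for the ideal (Re = ∞, zero force) strong-form
midpoint time-discrete equation with exact integration:
∫_Ω u¹ · (curl u¹) dx = ∫_Ω u⁰ · (curl u⁰) dx. -/
theorem discrete_helicity_conservation_ideal (Δt : ℝ) (hΔt : 0 < Δt)
    (u0 u1 ub : R3 → R3) (p : R3 → ℝ) (U : Set R3)
    (hU : IsOpen U) (hcube : cube ⊆ U)
    (hu0 : ContDiffOn ℝ 2 u0 U) (hu1 : ContDiffOn ℝ 2 u1 U)
    (hp : ContDiffOn ℝ 1 p U)
    (hub : ub = fun x => (2 : ℝ)⁻¹ • (u0 x + u1 x))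
    (hmom : ∀ x ∈ cube,
      Δt⁻¹ • (u1 x - u0 x) - cross3 (ub x) (vcurl ub x) + vgrad p x = 0)
    (hbc0 : TangentialBC u0) (hbc1 : TangentialBC u1)
    (hbcp : ∀ x : R3, onBdry x → p x = 0) :
    ∫ x in cube, dot3 (u1 x) (vcurl u1 x)
      = ∫ x in cube, dot3 (u0 x) (vcurl u0 x) := by
  have hΔt' : Δt ≠ 0 := ne_of_gt hΔt
  set F : R3 → R3 :=
    fun y => cross3 (u1 y - u0 y) (ub y) - ((2 * Δt) * p y) • vcurl ub y with hFdef
  have hub2 : ContDiffOn ℝ 2 ub U := by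
    rw [hub]; exact (hu0.add hu1).const_smul _
  -- smoothness of F
  have hFc : ContDiffOn ℝ 1 F U := by
    have c0 : ∀ k, ContDiffOn ℝ 1 (fun y => u0 y k) U :=
      fun k => contDiffOn_apply (hu0.of_le (by norm_num)) k
    have c1 : ∀ k, ContDiffOn ℝ 1 (fun y => u1 y k) U :=
      fun k => contDiffOn_apply (hu1.of_le (by norm_num)) k
    have cb : ∀ k, ContDiffOn ℝ 1 (fun y => ub y k) U :=
      fun k => contDiffOn_apply (hub2.of_le (by norm_num)) k
    have cd : ∀ j k : Fin 3, ContDiffOn ℝ 1 (fun y => pd j (fun z => ub z k) y) U :=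
      fun j k => contDiffOn_pd hU (contDiffOn_apply hub2 k) j
    have cq : ContDiffOn ℝ 1 (fun y => (2 * Δt) * p y) U := hp.const_smul (2 * Δt)
    apply contDiffOn_pi.mpr
    intro k
    fin_cases k
    · show ContDiffOn ℝ 1 (fun y => (u1 y 1 - u0 y 1) * ub y 2
        - (u1 y 2 - u0 y 2) * ub y 1
        - ((2 * Δt) * p y) * (pd 1 (fun z => ub z 2) y - pd 2 (fun z => ub z 1) y)) U
      exact ((((c1 1).sub (c0 1)).mul (cb 2)).sub (((c1 2).sub (c0 2)).mul (cb 1))).sub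
        (cq.mul ((cd 1 2).sub (cd 2 1)))
    · show ContDiffOn ℝ 1 (fun y => (u1 y 2 - u0 y 2) * ub y 0
        - (u1 y 0 - u0 y 0) * ub y 2
        - ((2 * Δt) * p y) * (pd 2 (fun z => ub z 0) y - pd 0 (fun z => ub z 2) y)) U
      exact ((((c1 2).sub (c0 2)).mul (cb 0)).sub (((c1 0).sub (c0 0)).mul (cb 2))).sub
        (cq.mul ((cd 2 0).sub (cd 0 2)))
    · show ContDiffOn ℝ 1 (fun y => (u1 y 0 - u0 y 0) * ub y 1
        - (u1 y 1 - u0 y 1) * ub y 0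
        - ((2 * Δt) * p y) * (pd 0 (fun z => ub z 1) y - pd 1 (fun z => ub z 0) y)) U
      exact ((((c1 0).sub (c0 0)).mul (cb 1)).sub (((c1 1).sub (c0 1)).mul (cb 0))).sub
        (cq.mul ((cd 0 1).sub (cd 1 0)))
  -- F vanishes on the boundary
  have hbdF : ∀ x, onBdry x → F x = 0 := by
    rintro x ⟨hxc, i, hfi⟩
    have hz : ∀ j, j ≠ i → u0 x j = 0 ∧ u1 x j = 0 :=
      fun j hj => ⟨hbc0 x hxc i hfi j hj, hbc1 x hxc i hfi j hj⟩
    have hzb : ∀ j, j ≠ i → ub x j = 0 := by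
      intro j hj; rw [hub]; simp [(hz j hj).1, (hz j hj).2]
    have hpx : p x = 0 := hbcp x ⟨hxc, ⟨i, hfi⟩⟩
    have hcz : cross3 (u1 x - u0 x) (ub x) = 0 := by
      funext k
      fin_cases i
      · have h1 := hz 1 (by decide); have h2 := hz 2 (by decide)
        have b1 := hzb 1 (by decide); have b2 := hzb 2 (by decide)
        fin_cases k <;> simp [cross3, h1.1, h1.2, h2.1, h2.2, b1, b2]
      · have h1 := hz 0 (by decide); have h2 := hz 2 (by decide)
        have b1 := hzb 0 (by decide); have b2 := hzb 2 (by decide)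
        fin_cases k <;> simp [cross3, h1.1, h1.2, h2.1, h2.2, b1, b2]
      · have h1 := hz 0 (by decide); have h2 := hz 1 (by decide)
        have b1 := hzb 0 (by decide); have b2 := hzb 1 (by decide)
        fin_cases k <;> simp [cross3, h1.1, h1.2, h2.1, h2.2, b1, b2]
    show cross3 (u1 x - u0 x) (ub x) - ((2 * Δt) * p x) • vcurl ub x = 0
    rw [hpx, hcz]
    simp
  -- pointwise identity on the cube
  have step1 : ∀ x ∈ cube,
      dot3 (u1 x) (vcurl u1 x) - dot3 (u0 x) (vcurl u0 x) = vdiv F x := by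
    intro x hx
    have hxU : x ∈ U := hcube hx
    have hnb := hU.mem_nhds hxU
    have hd0 : DifferentiableAt ℝ u0 x :=
      (hu0.differentiableOn (by norm_num)).differentiableAt hnb
    have hd1 : DifferentiableAt ℝ u1 x :=
      (hu1.differentiableOn (by norm_num)).differentiableAt hnb
    have hdub : DifferentiableAt ℝ ub x :=
      (hub2.differentiableOn (by norm_num)).differentiableAt hnb
    have hdp : DifferentiableAt ℝ p x :=
      (hp.differentiableOn one_ne_zero).differentiableAt hnb
    have hdW : DifferentiableAt ℝ (fun y => u1 y - u0 y) x := hd1.sub hd0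
    have hdq : DifferentiableAt ℝ (fun y => (2 * Δt) * p y) x := hdp.const_mul _
    have hdcurl : ∀ k, DifferentiableAt ℝ (fun y => vcurl ub y k) x := fun k =>
      ((contDiffOn_curl_apply hU hub2 k).differentiableOn one_ne_zero).differentiableAt hnb
    have hAk : ∀ k, DifferentiableAt ℝ (fun y => cross3 (u1 y - u0 y) (ub y) k) x := by
      intro k
      have hWk := fun k => diffAt_apply hdW k
      have hbk := fun k => diffAt_apply hdub k
      fin_cases k
      · exact ((hWk 1).mul (hbk 2)).sub ((hWk 2).mul (hbk 1))
      · exact ((hWk 2).mul (hbk 0)).sub ((hWk 0).mul (hbk 2))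
      · exact ((hWk 0).mul (hbk 1)).sub ((hWk 1).mul (hbk 0))
    have hBk : ∀ k, DifferentiableAt ℝ
        (fun y => (((2 * Δt) * p y) • vcurl ub y) k) x :=
      fun k => hdq.mul (hdcurl k)
    -- divergence splitting
    have e1 : vdiv F x = vdiv (fun y => cross3 (u1 y - u0 y) (ub y)) x
        - vdiv (fun y => ((2 * Δt) * p y) • vcurl ub y) x :=
      vdiv_sub hAk hBk
    have e2 := div_cross hdW hdub
    have e3 := div_qsmul hdq hdcurl
    have e4 : vdiv (vcurl ub) x = 0 := div_curl_zero hU hub2 hxU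
    -- gradient of (2Δt)p
    have hgq : ∀ k : Fin 3, vgrad (fun y => (2 * Δt) * p y) x k = (2 * Δt) * pd k p x :=
      fun k => pd_const_mul k _ hdp
    -- component values of curls
    have hubc : ∀ k, (fun y => ub y k) = fun y => 2⁻¹ * (u0 y k + u1 y k) := by
      intro k; funext y; rw [hub]; simp
    have d0 := fun k => diffAt_apply hd0 k
    have d1 := fun k => diffAt_apply hd1 k
    have hcb0 : vcurl ub x 0 = 2⁻¹ * (vcurl u0 x 0 + vcurl u1 x 0) := by
      rw [vcurl0, vcurl0, vcurl0, hubc 2, hubc 1,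
        pd_half_add 1 (d0 2) (d1 2), pd_half_add 2 (d0 1) (d1 1)]
      ring
    have hcb1 : vcurl ub x 1 = 2⁻¹ * (vcurl u0 x 1 + vcurl u1 x 1) := by
      rw [vcurl1, vcurl1, vcurl1, hubc 0, hubc 2,
        pd_half_add 2 (d0 0) (d1 0), pd_half_add 0 (d0 2) (d1 2)]
      ring
    have hcb2 : vcurl ub x 2 = 2⁻¹ * (vcurl u0 x 2 + vcurl u1 x 2) := by
      rw [vcurl2, vcurl2, vcurl2, hubc 1, hubc 0,
        pd_half_add 0 (d0 1) (d1 1), pd_half_add 1 (d0 0) (d1 0)]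
      ring
    have hWc : ∀ k, (fun y => (u1 y - u0 y) k) = fun y => u1 y k - u0 y k := by
      intro k; funext y; simp
    have hcw0 : vcurl (fun y => u1 y - u0 y) x 0 = vcurl u1 x 0 - vcurl u0 x 0 := by
      rw [vcurl0, vcurl0, vcurl0, hWc 2, hWc 1,
        pd_sub _ (d1 2) (d0 2), pd_sub _ (d1 1) (d0 1)]
      ring
    have hcw1 : vcurl (fun y => u1 y - u0 y) x 1 = vcurl u1 x 1 - vcurl u0 x 1 := by
      rw [vcurl1, vcurl1, vcurl1, hWc 0, hWc 2,
        pd_sub _ (d1 0) (d0 0), pd_sub _ (d1 2) (d0 2)]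
      ring
    have hcw2 : vcurl (fun y => u1 y - u0 y) x 2 = vcurl u1 x 2 - vcurl u0 x 2 := by
      rw [vcurl2, vcurl2, vcurl2, hWc 1, hWc 0,
        pd_sub _ (d1 1) (d0 1), pd_sub _ (d1 0) (d0 0)]
      ring
    have hubx : ∀ k, ub x k = 2⁻¹ * (u0 x k + u1 x k) := by
      intro k; rw [hub]; simp
    -- momentum equation, componentwise
    have hmk : ∀ k, u1 x k - u0 x k
        = Δt * (cross3 (ub x) (vcurl ub x) k - pd k p x) := by
      intro k
      have h := congrFun (hmom x hx) k
      simp only [Pi.add_apply, Pi.sub_apply, Pi.smul_apply, smul_eq_mul,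
        Pi.zero_apply] at h
      have hg : vgrad p x k = pd k p x := rfl
      rw [hg] at h
      have h2 : Δt⁻¹ * (u1 x k - u0 x k)
          = cross3 (ub x) (vcurl ub x) k - pd k p x := by linarith
      calc u1 x k - u0 x k = Δt * (Δt⁻¹ * (u1 x k - u0 x k)) := by
            field_simp
        _ = Δt * (cross3 (ub x) (vcurl ub x) k - pd k p x) := by rw [h2]
    -- step 2 : dot3 W curl ub = -Δt * dot3 grad p curl ub
    have step2 : dot3 (u1 x - u0 x) (vcurl ub x)
        = -Δt * dot3 (vgrad p x) (vcurl ub x) := by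
      have hA : dot3 (u1 x - u0 x) (vcurl ub x)
          = Δt * (dot3 (cross3 (ub x) (vcurl ub x)) (vcurl ub x)
            - dot3 (vgrad p x) (vcurl ub x)) := by
        simp only [dot3, Pi.sub_apply]
        rw [hmk 0, hmk 1, hmk 2]
        have hg : ∀ k : Fin 3, vgrad p x k = pd k p x := fun _ => rfl
        rw [hg 0, hg 1, hg 2]
        ring
      rw [hA, dot3_cross_self]
      ring
    -- step 3 : helicity difference as bilinear expression
    have step3 : dot3 (u1 x) (vcurl u1 x) - dot3 (u0 x) (vcurl u0 x)
        = dot3 (ub x) (vcurl (fun y => u1 y - u0 y) x)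
          + dot3 (u1 x - u0 x) (vcurl ub x) := by
      simp only [dot3, Pi.sub_apply]
      rw [hcw0, hcw1, hcw2, hcb0, hcb1, hcb2, hubx 0, hubx 1, hubx 2]
      ring
    -- gradient-q dot
    have hgd : dot3 (vgrad (fun y => (2 * Δt) * p y) x) (vcurl ub x)
        = (2 * Δt) * dot3 (vgrad p x) (vcurl ub x) := by
      simp only [dot3]
      rw [hgq 0, hgq 1, hgq 2]
      have hg : ∀ k : Fin 3, vgrad p x k = pd k p x := fun _ => rfl
      rw [hg 0, hg 1, hg 2]
      ring
    rw [step3, e1, e2, e3, e4, hgd, step2]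
    ring
  -- assemble
  have hi1 : IntegrableOn (fun x => dot3 (u1 x) (vcurl u1 x)) cube :=
    ((continuousOn_helicity hU hu1).mono hcube).integrableOn_compact isCompact_Icc
  have hi0 : IntegrableOn (fun x => dot3 (u0 x) (vcurl u0 x)) cube :=
    ((continuousOn_helicity hU hu0).mono hcube).integrableOn_compact isCompact_Icc
  have hcong : (∫ x in cube,
        (dot3 (u1 x) (vcurl u1 x) - dot3 (u0 x) (vcurl u0 x)))
      = ∫ x in cube, vdiv F x :=
    setIntegral_congr_fun (s := cube) measurableSet_Icc (fun x hx => step1 x hx)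
  have hkey : (∫ x in cube,
      (dot3 (u1 x) (vcurl u1 x) - dot3 (u0 x) (vcurl u0 x))) = 0 :=
    hcong.trans (integral_vdiv_eq_zero hU hcube hFc hbdF)
  rw [integral_sub hi1 hi0] at hkey
  linarith
end
end

section
/- Let Re > 0 and Δt > 0, let u⁰, u¹ : ℝ³ → ℝ³ be twice continuously differentiable on an open neighborhood of the closed unit cube Ω = [0,1]³, let p : ℝ³ → ℝ be continuously differentiable there, and set ū := (u⁰ + u¹)/2. Suppose the strong-form midpoint time-discrete Navier–Stokes equation holds at every point of Ω: (u¹ − u⁰)/Δt − ū × (curl ū) + ∇p + Re⁻¹ curl(curl ū) = 0, that div ū = 0 at every point of Ω, that u⁰ × n = 0 and u¹ × n = 0 on ∂Ω, and that p = 0 at every point of ∂Ω. Then the discrete energy law holds: ( ∫_Ω |u¹|² dx − ∫_Ω |u⁰|² dx ) / (2Δt) + Re⁻¹ ∫_Ω |curl ū|² dx = 0. -/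
open MeasureTheory

noncomputable section

/-! ### Auxiliary lemmas -/

lemma NS.comp {n : ℕ∞} {v : R3 → R3} {U : Set R3} (hv : ContDiffOn ℝ n v U) (j : Fin 3) :
    ContDiffOn ℝ n (fun x => v x j) U :=
  (ContinuousLinearMap.proj j : R3 →L[ℝ] ℝ).contDiff.comp_contDiffOn hv

lemma NS.pd_contDiffOn {f : R3 → ℝ} {U : Set R3} (hU : IsOpen U) (hf : ContDiffOn ℝ 2 f U)
    (i : Fin 3) : ContDiffOn ℝ 1 (pd i f) U :=
  (hf.fderiv_of_isOpen (m := 1) hU (by norm_num)).clm_apply contDiffOn_const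

lemma NS.pd_continuousOn {f : R3 → ℝ} {U : Set R3} (hU : IsOpen U) (hf : ContDiffOn ℝ 1 f U)
    (i : Fin 3) : ContinuousOn (pd i f) U :=
  (ContinuousLinearMap.apply ℝ ℝ (Pi.single i 1)).continuous.comp_continuousOn
    (hf.continuousOn_fderiv_of_isOpen hU le_rfl)

lemma NS.diffAt {f : R3 → ℝ} {U : Set R3} (hU : IsOpen U) (hf : ContDiffOn ℝ 1 f U) {x : R3}
    (hx : x ∈ U) : DifferentiableAt ℝ f x :=
  (hf.differentiableOn one_ne_zero).differentiableAt (hU.mem_nhds hx)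

lemma NS.pd_sub {f g : R3 → ℝ} {x : R3} (hf : DifferentiableAt ℝ f x)
    (hg : DifferentiableAt ℝ g x) (i : Fin 3) :
    pd i (fun y => f y - g y) x = pd i f x - pd i g x := by
  simp [pd, fderiv_fun_sub hf hg]

lemma NS.pd_mul {f g : R3 → ℝ} {x : R3} (hf : DifferentiableAt ℝ f x)
    (hg : DifferentiableAt ℝ g x) (i : Fin 3) :
    pd i (fun y => f y * g y) x = pd i f x * g x + f x * pd i g x := by
  rw [pd, fderiv_fun_mul hf hg]; simp [pd]; ring

lemma NS.pd_const_mul {f : R3 → ℝ} {c : ℝ} {x : R3} (hf : DifferentiableAt ℝ f x) (i : Fin 3) :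
    pd i (fun y => c * f y) x = c * pd i f x := by
  simp [pd, fderiv_const_mul hf]

/-- Product-rule expansion of the partial derivative of the typical component
`p·f − c(g₁g₂ − g₃g₄)` of the flux vector field. -/
lemma NS.pd_FF {P f g1 g2 g3 g4 : R3 → ℝ} {c : ℝ} {x : R3}
    (hP : DifferentiableAt ℝ P x) (hf : DifferentiableAt ℝ f x)
    (hg1 : DifferentiableAt ℝ g1 x) (hg2 : DifferentiableAt ℝ g2 x)
    (hg3 : DifferentiableAt ℝ g3 x) (hg4 : DifferentiableAt ℝ g4 x) (i : Fin 3) :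
    pd i (fun y => P y * f y - c * (g1 y * g2 y - g3 y * g4 y)) x
      = pd i P x * f x + P x * pd i f x
        - c * (pd i g1 x * g2 x + g1 x * pd i g2 x
            - (pd i g3 x * g4 x + g3 x * pd i g4 x)) := by
  rw [NS.pd_sub (f := fun y => P y * f y) (g := fun y => c * (g1 y * g2 y - g3 y * g4 y)) (hP.mul hf) (((hg1.mul hg2).sub (hg3.mul hg4)).const_mul c),
    NS.pd_mul hP hf, NS.pd_const_mul (f := fun y => g1 y * g2 y - g3 y * g4 y) ((hg1.mul hg2).sub (hg3.mul hg4)),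
    NS.pd_sub (f := fun y => g1 y * g2 y) (g := fun y => g3 y * g4 y) (hg1.mul hg2) (hg3.mul hg4), NS.pd_mul hg1 hg2, NS.pd_mul hg3 hg4]

/-- The flux vector field `F = p ū − Re⁻¹ (ū × curl ū)`, componentwise. -/
noncomputable def NSF (Re : ℝ) (p : R3 → ℝ) (ub : R3 → R3) (i : Fin 3) (y : R3) : ℝ :=
  p y * ub y i - Re⁻¹ * cross3 (ub y) (vcurl ub y) i

lemma NSF0 (Re : ℝ) (p : R3 → ℝ) (ub : R3 → R3) :
    NSF Re p ub 0 = fun y =>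
      p y * ub y 0 - Re⁻¹ * (ub y 1 * vcurl ub y 2 - ub y 2 * vcurl ub y 1) := by
  funext y; simp [NSF, cross3]

lemma NSF1 (Re : ℝ) (p : R3 → ℝ) (ub : R3 → R3) :
    NSF Re p ub 1 = fun y =>
      p y * ub y 1 - Re⁻¹ * (ub y 2 * vcurl ub y 0 - ub y 0 * vcurl ub y 2) := by
  funext y; simp [NSF, cross3]

lemma NSF2 (Re : ℝ) (p : R3 → ℝ) (ub : R3 → R3) :
    NSF Re p ub 2 = fun y =>
      p y * ub y 2 - Re⁻¹ * (ub y 0 * vcurl ub y 1 - ub y 1 * vcurl ub y 0) := by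
  funext y; simp [NSF, cross3]

/-- Discrete energy law for the strong-form midpoint time-discrete
Navier–Stokes equation: (∫|u¹|² − ∫|u⁰|²)/(2Δt) + Re⁻¹∫|curl ū|² = 0. -/
theorem discrete_energy_law (Re Δt : ℝ) (hRe : 0 < Re) (hΔt : 0 < Δt)
    (u0 u1 ub : R3 → R3) (p : R3 → ℝ) (U : Set R3)
    (hU : IsOpen U) (hcube : cube ⊆ U)
    (hu0 : ContDiffOn ℝ 2 u0 U) (hu1 : ContDiffOn ℝ 2 u1 U)
    (hp : ContDiffOn ℝ 1 p U)
    (hub : ub = fun x => (2 : ℝ)⁻¹ • (u0 x + u1 x))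
    (hmom : ∀ x ∈ cube,
      Δt⁻¹ • (u1 x - u0 x) - cross3 (ub x) (vcurl ub x) + vgrad p x
        + Re⁻¹ • vcurl (vcurl ub) x = 0)
    (hdiv : ∀ x ∈ cube, vdiv ub x = 0)
    (hbc0 : TangentialBC u0) (hbc1 : TangentialBC u1)
    (hbcp : ∀ x : R3, onBdry x → p x = 0) :
    ((∫ x in cube, dot3 (u1 x) (u1 x)) - ∫ x in cube, dot3 (u0 x) (u0 x))
        / (2 * Δt)
      + Re⁻¹ * ∫ x in cube, dot3 (vcurl ub x) (vcurl ub x) = 0 := by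
  have hcubeIcc : cube = Set.Icc (0 : R3) 1 := rfl
  -- Smoothness of the midpoint field and its curl
  have hub2 : ContDiffOn ℝ 2 ub U := by
    rw [hub]; exact ContDiffOn.const_smul _ (hu0.add hu1)
  have ha : ∀ j, ContDiffOn ℝ 2 (fun x => ub x j) U := fun j => NS.comp hub2 j
  have ha1 : ∀ j, ContDiffOn ℝ 1 (fun x => ub x j) U := fun j => (ha j).of_le one_le_two
  have hw0 : ContDiffOn ℝ 1 (fun x => vcurl ub x 0) U :=
    ((NS.pd_contDiffOn hU (ha 2) 1).sub (NS.pd_contDiffOn hU (ha 1) 2)).congr fun x _ => rfl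
  have hw1 : ContDiffOn ℝ 1 (fun x => vcurl ub x 1) U :=
    ((NS.pd_contDiffOn hU (ha 0) 2).sub (NS.pd_contDiffOn hU (ha 2) 0)).congr fun x _ => rfl
  have hw2 : ContDiffOn ℝ 1 (fun x => vcurl ub x 2) U :=
    ((NS.pd_contDiffOn hU (ha 1) 0).sub (NS.pd_contDiffOn hU (ha 0) 1)).congr fun x _ => rfl
  have hwc : ∀ j, ContDiffOn ℝ 1 (fun x => vcurl ub x j) U := fun j =>
    match j with | 0 => hw0 | 1 => hw1 | 2 => hw2
  -- Smoothness of the flux field components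
  have hF : ∀ i, ContDiffOn ℝ 1 (NSF Re p ub i) U := by
    intro i
    match i with
    | 0 =>
      rw [NSF0]
      exact (hp.mul (ha1 0)).sub
        (contDiffOn_const.mul (((ha1 1).mul (hwc 2)).sub ((ha1 2).mul (hwc 1))))
    | 1 =>
      rw [NSF1]
      exact (hp.mul (ha1 1)).sub
        (contDiffOn_const.mul (((ha1 2).mul (hwc 0)).sub ((ha1 0).mul (hwc 2))))
    | 2 =>
      rw [NSF2]
      exact (hp.mul (ha1 2)).sub
        (contDiffOn_const.mul (((ha1 0).mul (hwc 1)).sub ((ha1 1).mul (hwc 0))))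
  -- Divergence theorem for the flux field
  have hle : (0 : R3) ≤ 1 := fun i => by norm_num
  have hIoosub : (Set.pi Set.univ fun i => Set.Ioo ((0 : R3) i) ((1 : R3) i)) ⊆ U := by
    intro x hx
    refine hcube ?_
    rw [hcubeIcc]
    exact ⟨fun i => (hx i (Set.mem_univ i)).1.le, fun i => (hx i (Set.mem_univ i)).2.le⟩
  have hdivthm :
      (∫ x in Set.Icc (0 : R3) 1, ∑ i, pd i (NSF Re p ub i) x)
        = ∑ i : Fin 3,
            ((∫ x in Set.Icc ((0 : R3) ∘ i.succAbove) ((1 : R3) ∘ i.succAbove),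
                NSF Re p ub i (i.insertNth ((1 : R3) i) x))
              - ∫ x in Set.Icc ((0 : R3) ∘ i.succAbove) ((1 : R3) ∘ i.succAbove),
                NSF Re p ub i (i.insertNth ((0 : R3) i) x)) := by
    refine integral_divergence_of_hasFDerivAt_off_countable' 0 1 hle
      (fun i => NSF Re p ub i) (fun i x => fderiv ℝ (NSF Re p ub i) x) ∅
      Set.countable_empty (fun i => ((hF i).continuousOn).mono (hcubeIcc ▸ hcube))
      (fun x hx i => (NS.diffAt hU (hF i) (hIoosub hx.1)).hasFDerivAt) ?_
    · apply ContinuousOn.integrableOn_compact isCompact_Icc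
      apply continuousOn_finset_sum
      intro i _
      exact (NS.pd_continuousOn hU (hF i) i).mono (hcubeIcc ▸ hcube)
  -- All face contributions vanish
  have hFbd : ∀ (i : Fin 3) (c : ℝ), c = 0 ∨ c = 1 →
      ∀ y ∈ Set.Icc ((0 : R3) ∘ i.succAbove) ((1 : R3) ∘ i.succAbove),
        NSF Re p ub i (i.insertNth c y) = 0 := by
    intro i c hc y hy
    have hzc : i.insertNth c y ∈ cube := by
      rw [hcubeIcc]
      refine Fin.insertNth_mem_Icc.2 ⟨?_, hy⟩
      rcases hc with h | h <;> simp [h]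
    have hzi : (i.insertNth c y : R3) i = c := by simp
    have hface : onFace (i.insertNth c y) i := by rw [onFace, hzi]; exact hc
    have hpz : p (i.insertNth c y) = 0 := hbcp _ ⟨hzc, i, hface⟩
    have hubz : ∀ j, j ≠ i → ub (i.insertNth c y) j = 0 := by
      intro j hj
      rw [hub]
      simp [hbc0 _ hzc i hface j hj, hbc1 _ hzc i hface j hj]
    have hcross : cross3 (ub (i.insertNth c y)) (vcurl ub (i.insertNth c y)) i = 0 := by
      fin_cases i
      · have e1 := hubz 1 (by decide); have e2 := hubz 2 (by decide)
        simp at e1 e2 ⊢; simp [cross3, e1, e2]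
      · have e1 := hubz 0 (by decide); have e2 := hubz 2 (by decide)
        simp at e1 e2 ⊢; simp [cross3, e1, e2]
      · have e1 := hubz 0 (by decide); have e2 := hubz 1 (by decide)
        simp at e1 e2 ⊢; simp [cross3, e1, e2]
    rw [NSF, hpz, hcross]; ring
  have hfaces :
      (∑ i : Fin 3,
        ((∫ x in Set.Icc ((0 : R3) ∘ i.succAbove) ((1 : R3) ∘ i.succAbove),
            NSF Re p ub i (i.insertNth ((1 : R3) i) x))
          - ∫ x in Set.Icc ((0 : R3) ∘ i.succAbove) ((1 : R3) ∘ i.succAbove),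
            NSF Re p ub i (i.insertNth ((0 : R3) i) x))) = 0 := by
    refine Finset.sum_eq_zero fun i _ => ?_
    rw [setIntegral_eq_zero_of_forall_eq_zero (hFbd i ((1 : R3) i) (Or.inr rfl)),
      setIntegral_eq_zero_of_forall_eq_zero (hFbd i ((0 : R3) i) (Or.inl rfl)), sub_zero]
  -- Pointwise identity: div F = −Δt⁻¹ ū·(u¹−u⁰) − Re⁻¹ |curl ū|²
  have hkey : ∀ x ∈ cube,
      (∑ i, pd i (NSF Re p ub i) x)
        = -(Δt⁻¹ * dot3 (ub x) (u1 x - u0 x)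
          + Re⁻¹ * dot3 (vcurl ub x) (vcurl ub x)) := by
    intro x hx
    have hxU : x ∈ U := hcube hx
    have dP : DifferentiableAt ℝ p x := NS.diffAt hU hp hxU
    have dA : ∀ j, DifferentiableAt ℝ (fun y => ub y j) x :=
      fun j => NS.diffAt hU (ha1 j) hxU
    have dW : ∀ j, DifferentiableAt ℝ (fun y => vcurl ub y j) x :=
      fun j => NS.diffAt hU (hwc j) hxU
    have h0 : pd 0 (NSF Re p ub 0) x
        = pd 0 p x * ub x 0 + p x * pd 0 (fun y => ub y 0) x
          - Re⁻¹ * (pd 0 (fun y => ub y 1) x * vcurl ub x 2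
              + ub x 1 * pd 0 (fun y => vcurl ub y 2) x
              - (pd 0 (fun y => ub y 2) x * vcurl ub x 1
                + ub x 2 * pd 0 (fun y => vcurl ub y 1) x)) := by
      rw [NSF0, NS.pd_FF dP (dA 0) (dA 1) (dW 2) (dA 2) (dW 1)]
    have h1 : pd 1 (NSF Re p ub 1) x
        = pd 1 p x * ub x 1 + p x * pd 1 (fun y => ub y 1) x
          - Re⁻¹ * (pd 1 (fun y => ub y 2) x * vcurl ub x 0
              + ub x 2 * pd 1 (fun y => vcurl ub y 0) x
              - (pd 1 (fun y => ub y 0) x * vcurl ub x 2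
                + ub x 0 * pd 1 (fun y => vcurl ub y 2) x)) := by
      rw [NSF1, NS.pd_FF dP (dA 1) (dA 2) (dW 0) (dA 0) (dW 2)]
    have h2 : pd 2 (NSF Re p ub 2) x
        = pd 2 p x * ub x 2 + p x * pd 2 (fun y => ub y 2) x
          - Re⁻¹ * (pd 2 (fun y => ub y 0) x * vcurl ub x 1
              + ub x 0 * pd 2 (fun y => vcurl ub y 1) x
              - (pd 2 (fun y => ub y 1) x * vcurl ub x 0
                + ub x 1 * pd 2 (fun y => vcurl ub y 0) x)) := by
      rw [NSF2, NS.pd_FF dP (dA 2) (dA 0) (dW 1) (dA 1) (dW 0)]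
    -- curl components
    have wc0 : vcurl ub x 0 = pd 1 (fun y => ub y 2) x - pd 2 (fun y => ub y 1) x := rfl
    have wc1 : vcurl ub x 1 = pd 2 (fun y => ub y 0) x - pd 0 (fun y => ub y 2) x := rfl
    have wc2 : vcurl ub x 2 = pd 0 (fun y => ub y 1) x - pd 1 (fun y => ub y 0) x := rfl
    -- momentum equation components
    have hm := hmom x hx
    have hm0 := congrFun hm 0
    have hm1 := congrFun hm 1
    have hm2 := congrFun hm 2
    have cw0 : vcurl (vcurl ub) x 0
        = pd 1 (fun y => vcurl ub y 2) x - pd 2 (fun y => vcurl ub y 1) x := rfl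
    have cw1 : vcurl (vcurl ub) x 1
        = pd 2 (fun y => vcurl ub y 0) x - pd 0 (fun y => vcurl ub y 2) x := rfl
    have cw2 : vcurl (vcurl ub) x 2
        = pd 0 (fun y => vcurl ub y 1) x - pd 1 (fun y => vcurl ub y 0) x := rfl
    simp only [Pi.add_apply, Pi.sub_apply, Pi.smul_apply, Pi.zero_apply, smul_eq_mul,
      cross3, vgrad, Matrix.cons_val_zero, Matrix.cons_val_one, Matrix.head_cons,
      Matrix.cons_val_two, Matrix.tail_cons, cw0, cw1, cw2] at hm0 hm1 hm2
    have hdx := hdiv x hx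
    rw [vdiv] at hdx
    rw [Fin.sum_univ_three, h0, h1, h2, dot3, dot3, wc0, wc1, wc2]
    simp only [Pi.sub_apply]
    linear_combination (ub x 0) * hm0 + (ub x 1) * hm1 + (ub x 2) * hm2 + p x * hdx
  -- Assemble the integrals
  have hmeas : MeasurableSet cube := by rw [hcubeIcc]; exact measurableSet_Icc
  have hcompact : IsCompact cube := by rw [hcubeIcc]; exact isCompact_Icc
  have hcont_comp : ∀ (v : R3 → R3), ContDiffOn ℝ 2 v U →
      ∀ j, ContinuousOn (fun x => v x j) cube := fun v hv j =>
    ((NS.comp hv j).continuousOn).mono hcube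
  have hcA := hcont_comp ub hub2
  have hc0 := hcont_comp u0 hu0
  have hc1 := hcont_comp u1 hu1
  have hcW : ∀ j, ContinuousOn (fun x => vcurl ub x j) cube :=
    fun j => (hwc j).continuousOn.mono hcube
  have hIntW : IntegrableOn (fun x => dot3 (vcurl ub x) (vcurl ub x)) cube := by
    apply ContinuousOn.integrableOn_compact hcompact
    unfold dot3
    exact (((hcW 0).mul (hcW 0)).add ((hcW 1).mul (hcW 1))).add ((hcW 2).mul (hcW 2))
  have hInt1 : IntegrableOn (fun x => dot3 (u1 x) (u1 x)) cube := by
    apply ContinuousOn.integrableOn_compact hcompact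
    unfold dot3
    exact (((hc1 0).mul (hc1 0)).add ((hc1 1).mul (hc1 1))).add ((hc1 2).mul (hc1 2))
  have hInt0 : IntegrableOn (fun x => dot3 (u0 x) (u0 x)) cube := by
    apply ContinuousOn.integrableOn_compact hcompact
    unfold dot3
    exact (((hc0 0).mul (hc0 0)).add ((hc0 1).mul (hc0 1))).add ((hc0 2).mul (hc0 2))
  have hIntD : IntegrableOn (fun x => dot3 (ub x) (u1 x - u0 x)) cube := by
    apply ContinuousOn.integrableOn_compact hcompact
    have : ∀ j, ContinuousOn (fun x => (u1 x - u0 x) j) cube := by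
      intro j
      exact (hc1 j).sub (hc0 j)
    unfold dot3
    exact (((hcA 0).mul (this 0)).add ((hcA 1).mul (this 1))).add ((hcA 2).mul (this 2))
  -- the divergence integral both equals 0 and equals the energy expression
  have hzero : (∫ x in cube, (-(Δt⁻¹ * dot3 (ub x) (u1 x - u0 x)
      + Re⁻¹ * dot3 (vcurl ub x) (vcurl ub x)))) = 0 := by
    have := hdivthm.trans hfaces
    rw [← hcubeIcc] at this
    rw [← this]
    exact (setIntegral_congr_fun hmeas fun x hx => (hkey x hx).symm)
  rw [integral_neg, neg_eq_zero,
    integral_add (hIntD.const_mul Δt⁻¹) (hIntW.const_mul Re⁻¹),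
    integral_const_mul, integral_const_mul] at hzero
  -- midpoint identity: ū·(u¹−u⁰) = (|u¹|² − |u⁰|²)/2
  have hmid : (∫ x in cube, dot3 (ub x) (u1 x - u0 x))
      = ((∫ x in cube, dot3 (u1 x) (u1 x)) - ∫ x in cube, dot3 (u0 x) (u0 x)) / 2 := by
    have : (∫ x in cube, dot3 (ub x) (u1 x - u0 x))
        = ∫ x in cube, (dot3 (u1 x) (u1 x) - dot3 (u0 x) (u0 x)) / 2 := by
      refine setIntegral_congr_fun hmeas fun x _ => ?_
      rw [hub]
      simp only [dot3, Pi.sub_apply, Pi.smul_apply, Pi.add_apply, smul_eq_mul]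
      ring
    rw [this, integral_div, integral_sub hInt1 hInt0]
  rw [hmid] at hzero
  have hΔt' : Δt ≠ 0 := ne_of_gt hΔt
  field_simp at hzero ⊢
  linarith [hzero]
end
end
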